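/- Let T > 0 and let F : [0,T] × (0,∞) → ℝ be continuous, such that for each t the map x ↦ F(t,x) is nondecreasing and continuously differentiable, with ∂ₓF bounded on [0,T] × [ε,∞) for every ε > 0. Let U, V : [0,T] → ℝ be continuous with U(0) > 0 and U(0) ≤ V(0). For δ ≥ 0 let t_U^δ be the first time in [0,T] at which U equals δ (set t_U^δ = T if U never equals δ), and define t_V^δ analogously. Suppose U(t) ≤ U(0) + ∫₀ᵗ F(r,U(r)) dr for all t < t_U^0 and V(t) = V(0) + ∫₀ᵗ F(r,V(r)) dr for all t < t_V^0. Then for every δ ∈ (0, U(0)): U(t) ≤ V(t) for all t < min(t_U^δ, t_V^δ), and consequently t_U^δ ≤ t_V^δ. -/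

import Mathlib

open Set MeasureTheory intervalIntegral

section aux

variable {T : ℝ} {f : ℝ → ℝ} {δ : ℝ}

private lemma hit_nonempty : ({s | s ∈ Icc (0:ℝ) T ∧ f s = δ} ∪ {T}).Nonempty :=
  ⟨T, Or.inr rfl⟩

private lemma hit_bddBelow (hT : 0 ≤ T) :
    BddBelow ({s | s ∈ Icc (0:ℝ) T ∧ f s = δ} ∪ {T}) := by
  refine ⟨0, fun x hx => ?_⟩
  rcases hx with ⟨⟨h, _⟩, _⟩ | h
  · exact h
  · exact h ▸ hT

private lemma hit_le (hT : 0 ≤ T) : sInf ({s | s ∈ Icc (0:ℝ) T ∧ f s = δ} ∪ {T}) ≤ T :=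
  csInf_le (hit_bddBelow hT) (Or.inr rfl)

private lemma hit_mem (hT : 0 ≤ T) (hf : ContinuousOn f (Icc 0 T)) :
    sInf ({s | s ∈ Icc (0:ℝ) T ∧ f s = δ} ∪ {T}) ∈
      ({s | s ∈ Icc (0:ℝ) T ∧ f s = δ} ∪ {T}) := by
  refine IsClosed.csInf_mem ?_ hit_nonempty (hit_bddBelow hT)
  refine IsClosed.union ?_ isClosed_singleton
  have : {s | s ∈ Icc (0:ℝ) T ∧ f s = δ} = Icc (0:ℝ) T ∩ f ⁻¹' {δ} := by
    ext x; simp [mem_inter_iff]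
  rw [this]
  exact hf.preimage_isClosed_of_isClosed isClosed_Icc isClosed_singleton

private lemma gt_of_lt_hit (hT : 0 ≤ T) (hf : ContinuousOn f (Icc 0 T)) (h0 : δ < f 0) :
    ∀ t ∈ Icc (0:ℝ) T, t < sInf ({s | s ∈ Icc (0:ℝ) T ∧ f s = δ} ∪ {T}) → δ < f t := by
  intro t ht hlt
  by_contra hle
  push_neg at hle
  have hne : f t ≠ δ := fun h =>
    absurd (csInf_le (hit_bddBelow hT) (Or.inl ⟨ht, h⟩)) (not_le.2 hlt)
  have hδmem : δ ∈ Icc (f t) (f 0) := ⟨(lt_of_le_of_ne hle hne).le, h0.le⟩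
  obtain ⟨s₀, hs₀, hfs₀⟩ :=
    intermediate_value_Icc' ht.1 (hf.mono (Icc_subset_Icc le_rfl ht.2)) hδmem
  exact absurd (csInf_le (hit_bddBelow hT) (Or.inl ⟨⟨hs₀.1, hs₀.2.trans ht.2⟩, hfs₀⟩))
    (not_le.2 (lt_of_le_of_lt hs₀.2 hlt))

private lemma hit_mono (hT : 0 ≤ T) (hf : ContinuousOn f (Icc 0 T)) {δ' : ℝ}
    (h' : δ' < δ) (h0 : δ < f 0) :
    sInf ({s | s ∈ Icc (0:ℝ) T ∧ f s = δ} ∪ {T}) ≤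
      sInf ({s | s ∈ Icc (0:ℝ) T ∧ f s = δ'} ∪ {T}) := by
  by_contra h
  push_neg at h
  rcases hit_mem (δ := δ') hT hf with ⟨hIcc, heq⟩ | hTeq
  · have := gt_of_lt_hit hT hf h0 _ hIcc h
    rw [heq] at this
    exact absurd this (not_lt.2 h'.le)
  · rw [mem_singleton_iff] at hTeq
    rw [hTeq] at h
    exact absurd (hit_le hT) (not_le.2 h)

end aux

/-- Relaxed Grönwall-type comparison principle, valid up to the first time the functions hit a
positive level `δ`, for `F(t,x)` monotone in `x` and locally Lipschitz in `x` away from `0`. -/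
theorem gronwall_comparison_relaxed
    (T : ℝ) (hT : 0 < T)
    (F F' : ℝ → ℝ → ℝ)
    (hFcont : ContinuousOn (fun p : ℝ × ℝ => F p.1 p.2) (Icc (0 : ℝ) T ×ˢ Ioi (0 : ℝ)))
    (hFmono : ∀ t ∈ Icc (0 : ℝ) T, MonotoneOn (F t) (Ioi (0 : ℝ)))
    (hFderiv : ∀ t ∈ Icc (0 : ℝ) T, ∀ x ∈ Ioi (0 : ℝ), HasDerivAt (F t) (F' t x) x)
    (hF'cont : ∀ t ∈ Icc (0 : ℝ) T, ContinuousOn (F' t) (Ioi (0 : ℝ)))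
    (hF'bdd : ∀ ε > (0 : ℝ), ∃ B : ℝ, ∀ t ∈ Icc (0 : ℝ) T, ∀ x ∈ Ici ε, |F' t x| ≤ B)
    (U V : ℝ → ℝ)
    (hUcont : ContinuousOn U (Icc (0 : ℝ) T))
    (hVcont : ContinuousOn V (Icc (0 : ℝ) T))
    (hU0pos : 0 < U 0) (hUV0 : U 0 ≤ V 0)
    (tU tV : ℝ → ℝ)
    (htU : ∀ δ : ℝ, tU δ = sInf ({s | s ∈ Icc (0 : ℝ) T ∧ U s = δ} ∪ {T}))
    (htV : ∀ δ : ℝ, tV δ = sInf ({s | s ∈ Icc (0 : ℝ) T ∧ V s = δ} ∪ {T}))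
    (hUineq : ∀ t ∈ Icc (0 : ℝ) T, t < tU 0 →
      U t ≤ U 0 + ∫ r in (0 : ℝ)..t, F r (U r))
    (hVeq : ∀ t ∈ Icc (0 : ℝ) T, t < tV 0 →
      V t = V 0 + ∫ r in (0 : ℝ)..t, F r (V r)) :
    ∀ δ : ℝ, 0 < δ → δ < U 0 →
      (∀ t ∈ Icc (0 : ℝ) T, t < min (tU δ) (tV δ) → U t ≤ V t) ∧ tU δ ≤ tV δ := by
  intro δ hδ0 hδU
  have hT0 : (0:ℝ) ≤ T := hT.le
  have h0T : (0:ℝ) ∈ Icc (0:ℝ) T := ⟨le_refl 0, hT0⟩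
  have hV0 : δ < V 0 := hδU.trans_le hUV0
  obtain ⟨B, hB⟩ := hF'bdd δ hδ0
  have hBnn : (0:ℝ) ≤ B := (abs_nonneg _).trans (hB 0 h0T δ (mem_Ici.2 le_rfl))
  have htUle0 : tU δ ≤ tU 0 := by rw [htU, htU]; exact hit_mono hT0 hUcont hδ0 hδU
  have htVle0 : tV δ ≤ tV 0 := by rw [htV, htV]; exact hit_mono hT0 hVcont hδ0 hV0
  have hUgt : ∀ t ∈ Icc (0:ℝ) T, t < tU δ → δ < U t := by
    rw [htU]; exact gt_of_lt_hit hT0 hUcont hδU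
  have hVgt : ∀ t ∈ Icc (0:ℝ) T, t < tV δ → δ < V t := by
    rw [htV]; exact gt_of_lt_hit hT0 hVcont hV0
  -- extended functions
  set Ue : ℝ → ℝ := IccExtend hT0 ((Icc (0:ℝ) T).restrict U) with hUe
  set Ve : ℝ → ℝ := IccExtend hT0 ((Icc (0:ℝ) T).restrict V) with hVe2
  have hUeC : Continuous Ue := hUcont.restrict.Icc_extend'
  have hVeC : Continuous Ve := hVcont.restrict.Icc_extend'
  have hUeq : ∀ x ∈ Icc (0:ℝ) T, Ue x = U x := fun x hx => by
    rw [hUe, IccExtend_of_mem hT0 _ hx]; rfl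
  have hVeq2 : ∀ x ∈ Icc (0:ℝ) T, Ve x = V x := fun x hx => by
    rw [hVe2, IccExtend_of_mem hT0 _ hx]; rfl
  set g : ℝ → ℝ := fun r => max (Ue r - Ve r) 0 with hg
  have hgnn : ∀ r, 0 ≤ g r := fun r => le_max_right _ _
  have hgC : Continuous fun r => B * g r :=
    continuous_const.mul ((hUeC.sub hVeC).max continuous_const)
  set G : ℝ → ℝ := fun t => ∫ r in (0:ℝ)..t, B * g r with hG
  have hGd : ∀ t : ℝ, HasDerivAt G (B * g t) t := fun t =>
    intervalIntegral.integral_hasDerivAt_right (hgC.intervalIntegrable 0 t)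
      (hgC.stronglyMeasurableAtFilter _ _) hgC.continuousAt
  have key : ∀ s ∈ Icc (0:ℝ) T, s < min (tU δ) (tV δ) → U s ≤ V s := by
    intro s hs hsmin
    have hsU : s < tU δ := lt_of_lt_of_le hsmin (min_le_left _ _)
    have hsV : s < tV δ := lt_of_lt_of_le hsmin (min_le_right _ _)
    have hsubT : Icc (0:ℝ) s ⊆ Icc (0:ℝ) T := Icc_subset_Icc le_rfl hs.2
    have hUgt' : ∀ r ∈ Icc (0:ℝ) s, δ < U r := fun r hr =>
      hUgt r (hsubT hr) (lt_of_le_of_lt hr.2 hsU)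
    have hVgt' : ∀ r ∈ Icc (0:ℝ) s, δ < V r := fun r hr =>
      hVgt r (hsubT hr) (lt_of_le_of_lt hr.2 hsV)
    have hFU : ContinuousOn (fun r => F r (U r)) (Icc (0:ℝ) s) := by
      apply hFcont.comp (continuousOn_id.prodMk (hUcont.mono hsubT))
      intro r hr
      exact ⟨hsubT hr, lt_trans hδ0 (hUgt' r hr)⟩
    have hFV : ContinuousOn (fun r => F r (V r)) (Icc (0:ℝ) s) := by
      apply hFcont.comp (continuousOn_id.prodMk (hVcont.mono hsubT))
      intro r hr
      exact ⟨hsubT hr, lt_trans hδ0 (hVgt' r hr)⟩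
    have hptw : ∀ r ∈ Icc (0:ℝ) s, F r (U r) - F r (V r) ≤ B * g r := by
      intro r hr
      have hrT := hsubT hr
      have hU' := hUgt' r hr
      have hV' := hVgt' r hr
      have hgr : g r = max (U r - V r) 0 := by
        rw [hg]; simp only []; rw [hUeq r hrT, hVeq2 r hrT]
      rcases le_or_gt (U r) (V r) with h | h
      · have h1 : F r (U r) ≤ F r (V r) :=
          hFmono r hrT (lt_trans hδ0 hU') (lt_trans hδ0 hV') h
        have h2 : 0 ≤ B * g r := mul_nonneg hBnn (hgnn r)
        linarith
      · obtain ⟨c, hc, hceq⟩ := exists_hasDerivAt_eq_slope (F r) (F' r) h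
          (fun x hx =>
            (hFderiv r hrT x (lt_trans hδ0 (lt_of_lt_of_le hV' hx.1))).continuousAt.continuousWithinAt)
          (fun x hx => hFderiv r hrT x (lt_trans hδ0 (lt_of_lt_of_le hV' hx.1.le)))
        have hcB : |F' r c| ≤ B := hB r hrT c (lt_trans hV' hc.1).le
        have hne : U r - V r ≠ 0 := sub_ne_zero.2 h.ne'
        have heq2 : F r (U r) - F r (V r) = F' r c * (U r - V r) := by
          rw [hceq]; field_simp
        rw [hgr, max_eq_left (sub_nonneg.2 h.le), heq2]
        exact mul_le_mul_of_nonneg_right (le_of_abs_le hcB) (sub_nonneg.2 h.le)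
    have hWle : ∀ t ∈ Icc (0:ℝ) s, U t - V t ≤ G t := by
      intro t ht
      have hsub2 : Icc (0:ℝ) t ⊆ Icc (0:ℝ) s := Icc_subset_Icc le_rfl ht.2
      have hiU : IntervalIntegrable (fun r => F r (U r)) volume 0 t :=
        ContinuousOn.intervalIntegrable (by rw [uIcc_of_le ht.1]; exact hFU.mono hsub2)
      have hiV : IntervalIntegrable (fun r => F r (V r)) volume 0 t :=
        ContinuousOn.intervalIntegrable (by rw [uIcc_of_le ht.1]; exact hFV.mono hsub2)
      have hig : IntervalIntegrable (fun r => B * g r) volume 0 t := hgC.intervalIntegrable 0 t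
      have hU1 := hUineq t (hsubT ht) (lt_of_le_of_lt ht.2 (hsU.trans_le htUle0))
      have hV1 := hVeq t (hsubT ht) (lt_of_le_of_lt ht.2 (hsV.trans_le htVle0))
      have hInt : (∫ r in (0:ℝ)..t, F r (U r)) - (∫ r in (0:ℝ)..t, F r (V r))
          ≤ ∫ r in (0:ℝ)..t, B * g r := by
        rw [← intervalIntegral.integral_sub hiU hiV]
        exact intervalIntegral.integral_mono_on ht.1 (hiU.sub hiV) hig
          (fun r hr => hptw r (hsub2 hr))
      show U t - V t ≤ ∫ r in (0:ℝ)..t, B * g r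
      linarith
    have hbound : ∀ t ∈ Ico (0:ℝ) s, ‖B * g t‖ ≤ B * ‖G t‖ + 0 := by
      intro t ht
      have htIcc : t ∈ Icc (0:ℝ) s := ⟨ht.1, ht.2.le⟩
      have h1 : U t - V t ≤ G t := hWle t htIcc
      have hgt : g t = max (U t - V t) 0 := by
        rw [hg]; simp only []; rw [hUeq t (hsubT htIcc), hVeq2 t (hsubT htIcc)]
      have h2 : g t ≤ |G t| := by
        rw [hgt]; exact max_le (h1.trans (le_abs_self _)) (abs_nonneg _)
      rw [Real.norm_eq_abs, Real.norm_eq_abs, abs_mul, abs_of_nonneg hBnn,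
        abs_of_nonneg (hgnn t), add_zero]
      exact mul_le_mul_of_nonneg_left h2 hBnn
    have hgr := norm_le_gronwallBound_of_norm_deriv_right_le (δ := 0) (K := B) (ε := 0)
      (f := G) (f' := fun t => B * g t) (a := 0) (b := s)
      (fun t _ => (hGd t).continuousAt.continuousWithinAt)
      (fun t _ => (hGd t).hasDerivWithinAt)
      (by rw [hG]; simp [intervalIntegral.integral_same]) hbound s ⟨hs.1, le_rfl⟩
    rw [gronwallBound_ε0_δ0] at hgr
    have hGs : G s ≤ 0 := le_trans (le_abs_self _) (by rwa [Real.norm_eq_abs] at hgr)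
    have := hWle s ⟨hs.1, le_rfl⟩
    linarith
  refine ⟨key, ?_⟩
  by_contra hlt
  push_neg at hlt
  have htUleT : tU δ ≤ T := by rw [htU]; exact hit_le hT0
  have htVT : tV δ < T := lt_of_lt_of_le hlt htUleT
  have hmem : tV δ ∈ ({s | s ∈ Icc (0:ℝ) T ∧ V s = δ} ∪ {T}) := by
    rw [htV]; exact hit_mem hT0 hVcont
  rcases hmem with ⟨hIcc, hVd⟩ | hTeq
  swap
  · rw [mem_singleton_iff] at hTeq; exact absurd hTeq htVT.ne
  have h0lt : 0 < tV δ := by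
    rcases lt_or_eq_of_le hIcc.1 with h | h
    · exact h
    · rw [← h] at hVd; linarith
  have hUd : δ < U (tV δ) := hUgt _ hIcc hlt
  have hsub : Ico (0:ℝ) (tV δ) ⊆ Icc (0:ℝ) T := fun x hx => ⟨hx.1, hx.2.le.trans hIcc.2⟩
  have hne : (nhdsWithin (tV δ) (Ico (0:ℝ) (tV δ))).NeBot := by
    apply mem_closure_iff_nhdsWithin_neBot.1
    rw [closure_Ico h0lt.ne]
    exact ⟨h0lt.le, le_rfl⟩
  have hUt : Filter.Tendsto U (nhdsWithin (tV δ) (Ico (0:ℝ) (tV δ))) (nhds (U (tV δ))) :=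
    (hUcont (tV δ) hIcc).mono_left (nhdsWithin_mono _ hsub)
  have hVt : Filter.Tendsto V (nhdsWithin (tV δ) (Ico (0:ℝ) (tV δ))) (nhds (V (tV δ))) :=
    (hVcont (tV δ) hIcc).mono_left (nhdsWithin_mono _ hsub)
  have hUle : U (tV δ) ≤ V (tV δ) :=
    le_of_tendsto_of_tendsto hUt hVt
      (eventually_nhdsWithin_of_forall
        (fun x hx => key x (hsub hx) (lt_min (hx.2.trans hlt) hx.2)))
  rw [hVd] at hUle
  linarith
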